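/- Let d ≥ 1, let S ⊂ ℤ^d be finite, and let x ∈ ℤ^d ∖ S be such that (x + (ℤ_{≥0})^d) ∩ S = ∅ (the entire nonnegative orthant translated to x is disjoint from S). Define shell(T) = {y ∈ T : there exists z ∈ ℤ^d ∖ T with maxᵢ|yᵢ − zᵢ| ≤ 1} for any T ⊆ ℤ^d. Then |shell(S ∪ {x})| ≥ |shell(S)|; more precisely, x ∈ shell(S ∪ {x}) and the only cell of shell(S) that can fail to lie in shell(S ∪ {x}) is (x₁−1, …, x_d−1). -/

import Mathlib

/-- The shell of a set of cells `T ⊆ ℤ^d`: the cells of `T` that touch the complement,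
possibly only at a corner. -/
def shell (d : ℕ) (T : Set (Fin d → ℤ)) : Set (Fin d → ℤ) :=
  {y ∈ T | ∃ z, z ∉ T ∧ ∀ i, |y i - z i| ≤ 1}

/-- Adding to a finite set `S ⊆ ℤ^d` a cell `x` whose translated nonnegative orthant is
disjoint from `S` does not decrease the shell: `x` joins the shell, and the only cell
that can leave it is `(x₁−1, …, x_d−1)`. -/
theorem shell_mono_add_cell (d : ℕ) (hd : 1 ≤ d) (S : Set (Fin d → ℤ)) (hS : S.Finite)
    (x : Fin d → ℤ) (hx : x ∉ S)
    (horth : ∀ y : Fin d → ℤ, (∀ i, x i ≤ y i) → y ∉ S) :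
    x ∈ shell d (S ∪ {x}) ∧
    (∀ y ∈ shell d S, y ∉ shell d (S ∪ {x}) → y = fun i => x i - 1) ∧
    (shell d S).ncard ≤ (shell d (S ∪ {x})).ncard := by
  have hx1 : x ∈ shell d (S ∪ {x}) := by
    refine ⟨Or.inr rfl, fun i => x i + 1, ?_, ?_⟩
    · rintro (h | h)
      · exact horth _ (fun i => by linarith) h
      · have := congrFun h ⟨0, hd⟩
        simp at this
    · intro i; simp
  have key : ∀ y ∈ shell d S, y ∉ shell d (S ∪ {x}) → y = fun i => x i - 1 := by
    rintro y ⟨hyS, z, hz, hzd⟩ hy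
    have hw : ∀ z', z' ∉ S → (∀ i, |y i - z' i| ≤ 1) → z' = x := by
      intro z' hz' hzd'
      by_contra hne
      exact hy ⟨Or.inl hyS, z', fun h => h.elim hz' hne, hzd'⟩
    have hzx : z = x := hw z hz hzd
    rw [hzx] at hzd
    have hle : ∀ j, y j ≤ x j := by
      have hm : (fun j => max (x j) (y j)) = x := by
        refine hw _ (horth _ fun j => le_max_left _ _) ?_
        intro j
        rcases le_total (x j) (y j) with h | h
        · rw [max_eq_right h]; simp
        · rw [max_eq_left h]; exact hzd j
      intro j
      have := congrFun hm j
      simp only [max_eq_left_iff] at this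
      exact this
    funext i
    by_contra hne
    have hyi : y i = x i := by
      have h1 := hzd i
      rw [abs_le] at h1
      have h2 := hle i
      omega
    have hm : Function.update x i (x i + 1) = x := by
      refine hw _ (horth _ ?_) ?_
      · intro j
        rcases eq_or_ne j i with rfl | hj
        · simp
        · simp [Function.update_of_ne hj]
      · intro j
        rcases eq_or_ne j i with rfl | hj
        · simp [hyi]
        · simp only [Function.update_of_ne hj]; exact hzd j
    have := congrFun hm i
    simp at this
  refine ⟨hx1, key, ?_⟩
  have hxnS : x ∉ shell d S := fun h => hx h.1
  have hfin1 : (shell d S).Finite := hS.subset (fun y hy => hy.1)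
  have hfin2 : (shell d (S ∪ {x})).Finite :=
    (hS.union (Set.finite_singleton x)).subset (fun y hy => hy.1)
  set w : Fin d → ℤ := fun i => x i - 1 with hw
  have hsub : insert x (shell d S \ {w}) ⊆ shell d (S ∪ {x}) := by
    rintro y (rfl | ⟨hy1, hy2⟩)
    · exact hx1
    · by_contra h
      exact hy2 (key y hy1 h)
  calc (shell d S).ncard ≤ (insert w (shell d S \ {w})).ncard := by
        apply Set.ncard_le_ncard ?_ (hfin1.diff.insert w)
        intro y hy
        rcases eq_or_ne y w with rfl | h
        · exact Set.mem_insert _ _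
        · exact Set.mem_insert_of_mem _ ⟨hy, h⟩
    _ ≤ (shell d S \ {w}).ncard + 1 := Set.ncard_insert_le _ _
    _ = (insert x (shell d S \ {w})).ncard := by
        rw [Set.ncard_insert_of_notMem (fun h => hxnS h.1) hfin1.diff]
    _ ≤ (shell d (S ∪ {x})).ncard := Set.ncard_le_ncard hsub hfin2
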